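/- Let T = (T₁, T₂) be a pair of commuting 3×3 matrices of block form T_i = [[A_i, β_i],[0,0]] satisfying T₁T₁* + T₂T₂* ≤ I, and suppose ‖F_α(A₁,A₂)‖ ≤ 1 (which holds by the 2×2 von Neumann inequality). Then for every α ∈ [0,1), ‖F_α(T₁, T₂)‖ ≤ 2/√3, where F_α(z,w) = (z² + 2√(1−α²)w)/(2−α²). -/

import Mathlib

open Matrix ComplexOrder

private lemma normstar14 (M : Matrix (Fin 3) (Fin 3) ℂ) :
    ‖Matrix.toEuclideanCLM (𝕜 := ℂ) M‖ = ‖Matrix.toEuclideanCLM (𝕜 := ℂ) (star M)‖ := by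
  rw [← LinearIsometryEquiv.norm_map ContinuousLinearMap.adjoint (Matrix.toEuclideanCLM (𝕜 := ℂ) M),
    ← ContinuousLinearMap.star_eq_adjoint, ← map_star]

private lemma aux14 {α a b n : ℝ} (hα2 : α ^ 2 < 1) (ha : 0 ≤ a) (hb : 0 ≤ b)
    (hn : 0 ≤ n) (hab : a ^ 2 + b ^ 2 ≤ n ^ 2) :
    (2 - α ^ 2)⁻¹ * (a + 2 * Real.sqrt (1 - α ^ 2) * b) ≤ 2 / Real.sqrt 3 * n := by
  have hr : (0:ℝ) < 2 - α ^ 2 := by nlinarith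
  set c : ℝ := 2 * Real.sqrt (1 - α ^ 2) with hcdef
  have hc0 : (0:ℝ) ≤ c := by positivity
  have hc2 : c ^ 2 = 4 * (1 - α ^ 2) := by
    rw [hcdef, mul_pow, Real.sq_sqrt (by nlinarith)]; ring
  have s30 : (0:ℝ) < Real.sqrt 3 := by positivity
  have s32 : Real.sqrt 3 ^ 2 = 3 := Real.sq_sqrt (by norm_num)
  have step : Real.sqrt 3 * (a + c * b) ≤ 2 * (2 - α ^ 2) * n := by
    have h7 : 0 ≤ (15 - 12 * α ^ 2) * (n ^ 2 - (a ^ 2 + b ^ 2)) :=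
      mul_nonneg (by nlinarith) (by linarith)
    have hca : c ^ 2 * a ^ 2 = (4 - 4 * α ^ 2) * a ^ 2 := by rw [hc2]; ring
    have hcb : c ^ 2 * b ^ 2 = (4 - 4 * α ^ 2) * b ^ 2 := by rw [hc2]; ring
    have h8 : 3 * (a + c * b) ^ 2 ≤ (15 - 12 * α ^ 2) * (a ^ 2 + b ^ 2) := by
      nlinarith [sq_nonneg (c * a - b), hca, hcb]
    have h9 : (15 - 12 * α ^ 2) * (a ^ 2 + b ^ 2) ≤ (2 * (2 - α ^ 2) * n) ^ 2 := by
      nlinarith [h7, sq_nonneg ((1 - 2 * α ^ 2) * n)]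
    have h1 : 0 ≤ 2 * (2 - α ^ 2) * n :=
      mul_nonneg (mul_nonneg (by norm_num) hr.le) hn
    have h2 : (Real.sqrt 3 * (a + c * b)) ^ 2 ≤ (2 * (2 - α ^ 2) * n) ^ 2 := by
      rw [mul_pow, s32]; linarith
    exact le_of_pow_le_pow_left₀ two_ne_zero h1 h2
  rw [inv_mul_le_iff₀ hr]
  calc a + c * b ≤ 2 * (2 - α ^ 2) * n / Real.sqrt 3 := by
        rw [le_div_iff₀ s30]; linarith [step]
    _ = (2 - α ^ 2) * (2 / Real.sqrt 3 * n) := by field_simp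

theorem stmt14 (A : Fin 2 → Matrix (Fin 2) (Fin 2) ℂ) (β : Fin 2 → Fin 2 → ℂ)
    (T : Fin 2 → Matrix (Fin 3) (Fin 3) ℂ)
    (hT : ∀ i, T i = !![A i 0 0, A i 0 1, β i 0;
                       A i 1 0, A i 1 1, β i 1;
                       0, 0, 0])
    (hcomm : T 0 * T 1 = T 1 * T 0)
    (hrc : (1 - (T 0 * (T 0)ᴴ + T 1 * (T 1)ᴴ)).PosSemidef)
    (α : ℝ) (hα0 : 0 ≤ α) (hα1 : α < 1)
    (h2x2 : ‖Matrix.toEuclideanCLM (𝕜 := ℂ)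
      (((((2 - α ^ 2 : ℝ) : ℂ))⁻¹ • (A 0 ^ 2 + ((2 * Real.sqrt (1 - α ^ 2) : ℝ) : ℂ) • A 1) :
        Matrix (Fin 2) (Fin 2) ℂ))‖ ≤ 1) :
    ‖Matrix.toEuclideanCLM (𝕜 := ℂ)
      (((((2 - α ^ 2 : ℝ) : ℂ))⁻¹ • (T 0 ^ 2 + ((2 * Real.sqrt (1 - α ^ 2) : ℝ) : ℂ) • T 1) :
        Matrix (Fin 3) (Fin 3) ℂ))‖ ≤ 2 / Real.sqrt 3 := by
  have hα2 : α ^ 2 < 1 := by nlinarith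
  -- key inequality from the row contraction condition
  have key : ∀ ξ : EuclideanSpace ℂ (Fin 3),
      ‖Matrix.toEuclideanCLM (𝕜 := ℂ) (T 0)ᴴ ξ‖ ^ 2
        + ‖Matrix.toEuclideanCLM (𝕜 := ℂ) (T 1)ᴴ ξ‖ ^ 2 ≤ ‖ξ‖ ^ 2 := by
    intro ξ
    have h1 : 0 ≤ RCLike.re (inner ℂ ξ
        ((Matrix.toEuclideanCLM (𝕜 := ℂ) (1 - (T 0 * (T 0)ᴴ + T 1 * (T 1)ᴴ))) ξ) : ℂ) := by
      have h3 : (inner ℂ ξ ((Matrix.toEuclideanCLM (𝕜 := ℂ)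
            (1 - (T 0 * (T 0)ᴴ + T 1 * (T 1)ᴴ))) ξ) : ℂ)
          = dotProduct (star ((WithLp.equiv 2 _) ξ))
            ((1 - (T 0 * (T 0)ᴴ + T 1 * (T 1)ᴴ)) *ᵥ (WithLp.equiv 2 _) ξ) := by
        rw [EuclideanSpace.inner_eq_star_dotProduct, dotProduct_comm]; rfl
      rw [h3]
      exact hrc.re_dotProduct_nonneg _
    have hadj : ∀ i : Fin 2, ContinuousLinearMap.adjoint
        (Matrix.toEuclideanCLM (𝕜 := ℂ) (T i)) = Matrix.toEuclideanCLM (𝕜 := ℂ) (T i)ᴴ := by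
      intro i
      rw [← ContinuousLinearMap.star_eq_adjoint, ← map_star, Matrix.star_eq_conjTranspose]
    have e1 : (Matrix.toEuclideanCLM (𝕜 := ℂ) (1 - (T 0 * (T 0)ᴴ + T 1 * (T 1)ᴴ))) ξ
        = ξ - ((Matrix.toEuclideanCLM (𝕜 := ℂ) (T 0))
              ((Matrix.toEuclideanCLM (𝕜 := ℂ) (T 0)ᴴ) ξ)
            + (Matrix.toEuclideanCLM (𝕜 := ℂ) (T 1))
              ((Matrix.toEuclideanCLM (𝕜 := ℂ) (T 1)ᴴ) ξ)) := by
      simp only [_root_.map_sub, _root_.map_add, _root_.map_mul, _root_.map_one,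
        ContinuousLinearMap.sub_apply, ContinuousLinearMap.add_apply,
        ContinuousLinearMap.mul_apply, ContinuousLinearMap.one_apply]
    rw [e1, inner_sub_right, inner_add_right] at h1
    have h4 : ∀ i : Fin 2, RCLike.re (inner ℂ ξ ((Matrix.toEuclideanCLM (𝕜 := ℂ) (T i))
          ((Matrix.toEuclideanCLM (𝕜 := ℂ) (T i)ᴴ) ξ)) : ℂ)
        = ‖Matrix.toEuclideanCLM (𝕜 := ℂ) (T i)ᴴ ξ‖ ^ 2 := by
      intro i
      rw [← ContinuousLinearMap.adjoint_inner_left, hadj i]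
      exact inner_self_eq_norm_sq _
    have h5 : RCLike.re (inner ℂ ξ ξ : ℂ) = ‖ξ‖ ^ 2 := inner_self_eq_norm_sq ξ
    simp only [_root_.map_sub, _root_.map_add] at h1
    rw [h4 0, h4 1, h5] at h1
    linarith
  -- pass to the adjoint
  rw [normstar14]
  have hMs : star ((((2 - α ^ 2 : ℝ) : ℂ))⁻¹
        • (T 0 ^ 2 + ((2 * Real.sqrt (1 - α ^ 2) : ℝ) : ℂ) • T 1))
      = (((2 - α ^ 2 : ℝ) : ℂ))⁻¹
        • ((T 0)ᴴ ^ 2 + ((2 * Real.sqrt (1 - α ^ 2) : ℝ) : ℂ) • (T 1)ᴴ) := by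
    simp [star_smul, star_add, star_pow, Matrix.star_eq_conjTranspose, Complex.star_def,
      Complex.conj_ofReal, map_inv₀]
  rw [hMs]
  apply ContinuousLinearMap.opNorm_le_bound _ (by positivity)
  intro ξ
  have expand : (Matrix.toEuclideanCLM (𝕜 := ℂ) ((((2 - α ^ 2 : ℝ) : ℂ))⁻¹
        • ((T 0)ᴴ ^ 2 + ((2 * Real.sqrt (1 - α ^ 2) : ℝ) : ℂ) • (T 1)ᴴ))) ξ
      = (((2 - α ^ 2 : ℝ) : ℂ))⁻¹ • ((Matrix.toEuclideanCLM (𝕜 := ℂ) (T 0)ᴴ)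
            ((Matrix.toEuclideanCLM (𝕜 := ℂ) (T 0)ᴴ) ξ)
          + ((2 * Real.sqrt (1 - α ^ 2) : ℝ) : ℂ)
            • (Matrix.toEuclideanCLM (𝕜 := ℂ) (T 1)ᴴ) ξ) := by
    simp only [_root_.map_smul, _root_.map_add, _root_.map_pow, pow_two,
      _root_.map_mul, ContinuousLinearMap.smul_apply, ContinuousLinearMap.add_apply,
      ContinuousLinearMap.mul_apply]
  rw [expand]
  have haa : ‖(Matrix.toEuclideanCLM (𝕜 := ℂ) (T 0)ᴴ)
      ((Matrix.toEuclideanCLM (𝕜 := ℂ) (T 0)ᴴ) ξ)‖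
      ≤ ‖Matrix.toEuclideanCLM (𝕜 := ℂ) (T 0)ᴴ ξ‖ := by
    have h6 := key ((Matrix.toEuclideanCLM (𝕜 := ℂ) (T 0)ᴴ) ξ)
    nlinarith [norm_nonneg ((Matrix.toEuclideanCLM (𝕜 := ℂ) (T 0)ᴴ)
      ((Matrix.toEuclideanCLM (𝕜 := ℂ) (T 0)ᴴ) ξ)),
      norm_nonneg ((Matrix.toEuclideanCLM (𝕜 := ℂ) (T 1)ᴴ)
      ((Matrix.toEuclideanCLM (𝕜 := ℂ) (T 0)ᴴ) ξ)),
      norm_nonneg ((Matrix.toEuclideanCLM (𝕜 := ℂ) (T 0)ᴴ) ξ)]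
  have htri : ‖(Matrix.toEuclideanCLM (𝕜 := ℂ) (T 0)ᴴ)
        ((Matrix.toEuclideanCLM (𝕜 := ℂ) (T 0)ᴴ) ξ)
      + ((2 * Real.sqrt (1 - α ^ 2) : ℝ) : ℂ) • (Matrix.toEuclideanCLM (𝕜 := ℂ) (T 1)ᴴ) ξ‖
      ≤ ‖Matrix.toEuclideanCLM (𝕜 := ℂ) (T 0)ᴴ ξ‖
        + 2 * Real.sqrt (1 - α ^ 2) * ‖Matrix.toEuclideanCLM (𝕜 := ℂ) (T 1)ᴴ ξ‖ := by
    refine le_trans (norm_add_le _ _) ?_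
    have hsm : ‖((2 * Real.sqrt (1 - α ^ 2) : ℝ) : ℂ)
          • (Matrix.toEuclideanCLM (𝕜 := ℂ) (T 1)ᴴ) ξ‖
        = 2 * Real.sqrt (1 - α ^ 2) * ‖Matrix.toEuclideanCLM (𝕜 := ℂ) (T 1)ᴴ ξ‖ := by
      rw [norm_smul, Complex.norm_real, Real.norm_of_nonneg (by positivity)]
    rw [hsm]
    linarith [haa]
  rw [norm_smul]
  have hnr : ‖(((2 - α ^ 2 : ℝ) : ℂ))⁻¹‖ = (2 - α ^ 2)⁻¹ := by
    rw [norm_inv, Complex.norm_real, Real.norm_of_nonneg (by nlinarith)]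
  rw [hnr]
  calc (2 - α ^ 2)⁻¹ * ‖(Matrix.toEuclideanCLM (𝕜 := ℂ) (T 0)ᴴ)
        ((Matrix.toEuclideanCLM (𝕜 := ℂ) (T 0)ᴴ) ξ)
      + ((2 * Real.sqrt (1 - α ^ 2) : ℝ) : ℂ) • (Matrix.toEuclideanCLM (𝕜 := ℂ) (T 1)ᴴ) ξ‖
      ≤ (2 - α ^ 2)⁻¹ * (‖Matrix.toEuclideanCLM (𝕜 := ℂ) (T 0)ᴴ ξ‖
        + 2 * Real.sqrt (1 - α ^ 2) * ‖Matrix.toEuclideanCLM (𝕜 := ℂ) (T 1)ᴴ ξ‖) :=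
      mul_le_mul_of_nonneg_left htri (inv_nonneg.mpr (by nlinarith))
    _ ≤ 2 / Real.sqrt 3 * ‖ξ‖ :=
      aux14 hα2 (norm_nonneg _) (norm_nonneg _) (norm_nonneg _) (key ξ)
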